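/- Let θ ≠ 1, β > n, s > n/2, and suppose m : ℝⁿ → ℂ satisfies, for all j with jθ > 0 and all s' ≤ s with s' > n/2: ‖m^j‖_{H^{s'}} ≤ C 2^{jθ(2s'-β)/2}, where m^j(ξ) = m(2^j ξ)φ(ξ) for a fixed Littlewood–Paley bump φ supported in {1/2 ≤ |ξ| ≤ 2} with ∑_j φ(2^{-j}ξ) = 1 for ξ ≠ 0. Then the kernel 𝒦^l := ∑_{j: jθ>0} 𝒦_{m_j}, where m_j(ξ) = m(ξ)φ(2^{-j}ξ), is integrable: ‖𝒦^l‖_{L¹(ℝⁿ)} < ∞. -/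

import Mathlib

open MeasureTheory Real Complex
open scoped ENNReal FourierTransform RealInnerProductSpace

/-- The `L²` Sobolev norm of order `s`: `‖F‖_{H^s} = ‖(1+|ξ|²)^{s/2} F̂(ξ)‖_{L²}`. -/
noncomputable def sobolevNorm {n : ℕ} (s : ℝ) (F : EuclideanSpace ℝ (Fin n) → ℂ) : ℝ≥0∞ :=
  eLpNorm (fun ξ => ((1 + ‖ξ‖ ^ 2) ^ (s / 2) : ℝ) • (𝓕 F ξ)) 2 volume

section Aux

variable {n : ℕ}

/-- The Fourier transform of any function is a.e. strongly measurable (with the junk-value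
convention that the Fourier integral of a non-integrable function is zero). -/
lemma fourier_aesm (F : EuclideanSpace ℝ (Fin n) → ℂ) :
    AEStronglyMeasurable (𝓕 F) volume := by
  by_cases hF : Integrable F volume
  · exact (VectorFourier.fourierIntegral_continuous Real.continuous_fourierChar
      (by exact continuous_inner) hF).aestronglyMeasurable
  · have h0 : 𝓕 F = 0 := by
      ext w
      refine integral_undef fun h => hF ?_
      exact (Real.fourierIntegral_convergent_iff w).mp h
    rw [h0]; exact aestronglyMeasurable_const

lemma fourierInv_aesm (F : EuclideanSpace ℝ (Fin n) → ℂ) :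
    AEStronglyMeasurable (𝓕⁻ F) volume := by
  rw [Real.fourierInv_eq_fourier_comp_neg]
  exact fourier_aesm _

/-- Change of variables `x ↦ c • x` in a lower Lebesgue integral on Euclidean space. -/
lemma lintegral_comp_smul' (f : EuclideanSpace ℝ (Fin n) → ℝ≥0∞) (hf : AEMeasurable f volume)
    {c : ℝ} (hc : c ≠ 0) :
    ∫⁻ x, f (c • x) = ENNReal.ofReal |(c ^ n)⁻¹| * ∫⁻ x, f x := by
  have hmap := Measure.map_addHaar_smul (volume : Measure (EuclideanSpace ℝ (Fin n))) hc
  rw [finrank_euclideanSpace_fin] at hmap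
  have hae : AEMeasurable f (Measure.map (c • ·) volume) := by
    rw [hmap]; exact hf.smul_measure _
  calc ∫⁻ x, f (c • x) = ∫⁻ x, f x ∂(Measure.map (c • ·) volume) :=
        (lintegral_map' hae (measurable_const_smul c).aemeasurable).symm
    _ = ENNReal.ofReal |(c ^ n)⁻¹| * ∫⁻ x, f x := by
        rw [hmap, lintegral_smul_measure, smul_eq_mul]

/-- Change of variables `x ↦ -x` in a lower Lebesgue integral on Euclidean space. -/
lemma lintegral_comp_neg' (f : EuclideanSpace ℝ (Fin n) → ℝ≥0∞) (hf : AEMeasurable f volume) :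
    ∫⁻ x, f (-x) = ∫⁻ x, f x := by
  have h := (Measure.measurePreserving_neg (volume : Measure (EuclideanSpace ℝ (Fin n))))
  calc ∫⁻ x, f (-x) = ∫⁻ x, f x ∂(Measure.map Neg.neg volume) :=
        (lintegral_map' (by rw [h.map_eq]; exact hf) measurable_neg.aemeasurable).symm
    _ = ∫⁻ x, f x := by rw [h.map_eq]

/-- Dilation behaviour of the inverse Fourier transform. -/
lemma fourierInv_comp_smul (F : EuclideanSpace ℝ (Fin n) → ℂ) {c : ℝ} (hc : c ≠ 0)
    (x : EuclideanSpace ℝ (Fin n)) :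
    𝓕⁻ (fun ξ => F (c • ξ)) x = |(c ^ n)⁻¹| • 𝓕⁻ F (c⁻¹ • x) := by
  have h1 : 𝓕⁻ (fun ξ => F (c • ξ)) x
      = ∫ v, (fun η => 𝐞 ⟪η, c⁻¹ • x⟫ • F η) (c • v) := by
    rw [Real.fourierInv_eq]
    refine integral_congr_ae (Filter.Eventually.of_forall fun ξ => ?_)
    simp only
    rw [real_inner_smul_left, real_inner_smul_right, ← mul_assoc, mul_inv_cancel₀ hc, one_mul]
  rw [h1, MeasureTheory.Measure.integral_comp_smul volume
    (fun η => 𝐞 ⟪η, c⁻¹ • x⟫ • F η) c, finrank_euclideanSpace_fin,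
    ← Real.fourierInv_eq]

/-- The constant in the Cauchy–Schwarz bound: the `L²` norm of the Japanese bracket weight. -/
noncomputable def Kw (n : ℕ) (s' : ℝ) : ℝ≥0∞ :=
  (∫⁻ x : EuclideanSpace ℝ (Fin n),
    ENNReal.ofReal ((1 + ‖x‖ ^ 2) ^ (-s' / 2)) ^ (2 : ℝ)) ^ (1 / (2:ℝ))

lemma Kw_lt_top {s' : ℝ} (hs' : (n : ℝ) < 2 * s') : Kw n s' < ⊤ := by
  have h1 : ∫⁻ x : EuclideanSpace ℝ (Fin n),
      ENNReal.ofReal ((1 + ‖x‖ ^ 2) ^ (-s' / 2)) ^ (2 : ℝ) < ⊤ := by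
    have heq : ∀ x : EuclideanSpace ℝ (Fin n),
        ENNReal.ofReal ((1 + ‖x‖ ^ 2) ^ (-s' / 2)) ^ (2 : ℝ)
          = ENNReal.ofReal ((1 + ‖x‖ ^ 2) ^ (-(2 * s') / 2)) := by
      intro x
      rw [ENNReal.ofReal_rpow_of_nonneg (by positivity) (by norm_num : (0:ℝ) ≤ 2),
        ← Real.rpow_mul (by positivity)]
      congr 1
      ring_nf
    simp_rw [heq]
    have hint : Integrable
        (fun x : EuclideanSpace ℝ (Fin n) => (1 + ‖x‖ ^ 2) ^ (-(2 * s') / 2)) volume := by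
      apply integrable_rpow_neg_one_add_norm_sq
      rwa [finrank_euclideanSpace_fin]
    exact hint.lintegral_lt_top
  exact ENNReal.rpow_lt_top_of_nonneg (by norm_num) h1.ne

/-- Cauchy–Schwarz: the `L¹` norm of `𝓕 F` is controlled by the Sobolev norm of `F`. -/
lemma cs_bound {s' : ℝ} (F : EuclideanSpace ℝ (Fin n) → ℂ) :
    ∫⁻ x, (‖𝓕 F x‖₊ : ℝ≥0∞) ≤ Kw n s' * sobolevNorm s' F := by
  set wi : EuclideanSpace ℝ (Fin n) → ℝ≥0∞ :=
    fun x => ENNReal.ofReal ((1 + ‖x‖ ^ 2) ^ (-s' / 2)) with hwi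
  set w : EuclideanSpace ℝ (Fin n) → ℝ≥0∞ :=
    fun x => ENNReal.ofReal ((1 + ‖x‖ ^ 2) ^ (s' / 2)) with hw
  have hmeas_wi : Measurable wi := by
    apply ENNReal.measurable_ofReal.comp
    exact ((continuous_const.add ((continuous_norm).pow 2)).rpow_const
      (fun x => Or.inl (by simp only [Pi.add_apply, Pi.pow_apply]; positivity))).measurable
  have hmeas_w : Measurable w := by
    apply ENNReal.measurable_ofReal.comp
    exact ((continuous_const.add ((continuous_norm).pow 2)).rpow_const
      (fun x => Or.inl (by simp only [Pi.add_apply, Pi.pow_apply]; positivity))).measurable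
  have hFm : AEMeasurable (fun x => (‖𝓕 F x‖₊ : ℝ≥0∞)) volume := (fourier_aesm F).enorm
  have hcancel : ∀ x, (‖𝓕 F x‖₊ : ℝ≥0∞) = (wi * fun y => w y * ‖𝓕 F y‖₊) x := by
    intro x
    have hb : (0:ℝ) < 1 + ‖x‖ ^ 2 := by positivity
    have : wi x * w x = 1 := by
      rw [hwi, hw, ← ENNReal.ofReal_mul (by positivity), ← Real.rpow_add hb]
      have h0 : -s' / 2 + s' / 2 = 0 := by ring
      rw [h0, Real.rpow_zero, ENNReal.ofReal_one]
    simp only [Pi.mul_apply, ← mul_assoc, this, one_mul]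
  calc ∫⁻ x, (‖𝓕 F x‖₊ : ℝ≥0∞)
      = ∫⁻ x, (wi * fun y => w y * ‖𝓕 F y‖₊) x := by simp_rw [← hcancel]
    _ ≤ (∫⁻ x, wi x ^ (2:ℝ)) ^ (1/(2:ℝ)) * (∫⁻ x, (w x * ‖𝓕 F x‖₊) ^ (2:ℝ)) ^ (1/(2:ℝ)) := by
        refine ENNReal.lintegral_mul_le_Lp_mul_Lq volume ⟨by norm_num, by norm_num, by norm_num⟩
          hmeas_wi.aemeasurable ((hmeas_w.aemeasurable.mul hFm))
    _ = Kw n s' * sobolevNorm s' F := by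
        congr 1
        rw [sobolevNorm, eLpNorm_eq_lintegral_rpow_enorm_toReal two_ne_zero ENNReal.ofNat_ne_top]
        simp only [ENNReal.toReal_ofNat]
        congr 1
        refine lintegral_congr fun x => ?_
        have : (‖((1 + ‖x‖ ^ 2) ^ (s' / 2) : ℝ) • 𝓕 F x‖₊ : ℝ≥0∞) = w x * ‖𝓕 F x‖₊ := by
          rw [nnnorm_smul, ENNReal.coe_mul, ← enorm_eq_nnnorm, Real.enorm_eq_ofReal (by positivity)]
        rw [enorm_eq_nnnorm, this]

/-- Pointwise: the extended norm of a `tsum` is at most the `tsum` of the extended norms. -/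
lemma ennnorm_tsum_le' (t : ℤ → ℂ) :
    (‖∑' j, t j‖₊ : ℝ≥0∞) ≤ ∑' j, (‖t j‖₊ : ℝ≥0∞) := by
  by_cases h : Summable t
  · have h' : Summable fun j => ‖t j‖₊ := by
      rw [← NNReal.summable_coe]
      simpa only [coe_nnnorm] using (summable_norm_iff.mpr h)
    have h2 : ‖∑' j, t j‖₊ ≤ ∑' j, ‖t j‖₊ := nnnorm_tsum_le h'
    calc (‖∑' j, t j‖₊ : ℝ≥0∞) ≤ ((∑' j, ‖t j‖₊ : NNReal) : ℝ≥0∞) := ENNReal.coe_le_coe.2 h2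
      _ = ∑' j, (‖t j‖₊ : ℝ≥0∞) := ENNReal.coe_tsum h'
  · rw [tsum_eq_zero_of_not_summable h]
    simp

/-- Summability of the two-sided geometric series. -/
lemma geom_tsum_lt_top {c M : ℝ} (hc : 0 < c) (hM : 0 ≤ M) :
    ∑' j : ℤ, ENNReal.ofReal (M * 2 ^ (-(c * |(j : ℝ)|))) < ⊤ := by
  have hbase0 : (0:ℝ) ≤ 2 ^ (-c) := Real.rpow_nonneg (by norm_num) _
  have hbase1 : (2:ℝ) ^ (-c) < 1 :=
    Real.rpow_lt_one_of_one_lt_of_neg one_lt_two (neg_neg_iff_pos.mpr hc)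
  have hgeo : Summable (fun k : ℕ => M * ((2:ℝ) ^ (-c)) ^ k) :=
    (summable_geometric_of_lt_one hbase0 hbase1).mul_left M
  have hsum : Summable (fun j : ℤ => M * 2 ^ (-(c * |(j : ℝ)|))) := by
    refine Summable.of_nat_of_neg (hgeo.congr fun k => ?_) (hgeo.congr fun k => ?_)
    · have hexp : -(c * (k:ℝ)) = (-c) * (k:ℝ) := by ring
      rw [Int.cast_natCast, Nat.abs_cast, hexp, Real.rpow_mul (by norm_num : (0:ℝ) ≤ 2),
        Real.rpow_natCast]
    · have hexp : -(c * (k:ℝ)) = (-c) * (k:ℝ) := by ring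
      rw [Int.cast_neg, Int.cast_natCast, abs_neg, Nat.abs_cast, hexp,
        Real.rpow_mul (by norm_num : (0:ℝ) ≤ 2), Real.rpow_natCast]
  rw [← ENNReal.ofReal_tsum_of_nonneg (fun j => by positivity) hsum]
  exact ENNReal.ofReal_lt_top

end Aux

/-- If `θ ≠ 1`, `β > n`, `s > n/2` and the pieces `m^j(ξ) = m(2^j ξ) φ(ξ)` satisfy
`‖m^j‖_{H^{s'}} ≤ C 2^{jθ(2s'-β)/2}` for all `j` with `jθ > 0` and all `n/2 < s' ≤ s`,
then the kernel `𝒦^l = ∑_{j : jθ>0} 𝒦_{m_j}`, `m_j(ξ) = m(ξ) φ(2^{-j} ξ)`, is integrable. -/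
theorem statement3 (n : ℕ) (θ β s : ℝ) (hθ : θ ≠ 1) (hβ : β > n) (hs : s > n / 2)
    (φ : EuclideanSpace ℝ (Fin n) → ℝ)
    (hφsupp : Function.support φ ⊆ {ξ | 1/2 ≤ ‖ξ‖ ∧ ‖ξ‖ ≤ 2})
    (hφsum : ∀ ξ : EuclideanSpace ℝ (Fin n), ξ ≠ 0 → ∑' j : ℤ, φ ((2 : ℝ) ^ (-j) • ξ) = 1)
    (m : EuclideanSpace ℝ (Fin n) → ℂ) (C : ℝ)
    (hm : ∀ j : ℤ, 0 < (j : ℝ) * θ → ∀ s' : ℝ, n / 2 < s' → s' ≤ s →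
      sobolevNorm s' (fun ξ => m ((2 : ℝ) ^ j • ξ) * (φ ξ : ℂ)) ≤
        ENNReal.ofReal (C * (2 : ℝ) ^ ((j : ℝ) * θ * (2 * s' - β) / 2))) :
    eLpNorm (fun x : EuclideanSpace ℝ (Fin n) =>
        ∑' j : ℤ, if 0 < (j : ℝ) * θ then
          𝓕⁻ (fun ξ => m ξ * (φ ((2 : ℝ) ^ (-j) • ξ) : ℂ)) x else 0) 1 volume < ⊤ := by
  classical
  by_cases hθ0 : θ = 0
  · have hz : (fun x : EuclideanSpace ℝ (Fin n) =>
        ∑' j : ℤ, if 0 < (j : ℝ) * θ then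
          𝓕⁻ (fun ξ => m ξ * (φ ((2 : ℝ) ^ (-j) • ξ) : ℂ)) x else 0)
        = fun _ => 0 := by
      funext x
      simp [hθ0]
    rw [hz]
    simp [eLpNorm_zero]
  -- Main case: `θ ≠ 0`.
  set s' : ℝ := min s ((n + β) / 4) with hs'def
  have hs'1 : (n : ℝ) / 2 < s' := lt_min hs (by push_cast; linarith)
  have hs'2 : s' ≤ s := min_le_left _ _
  have hs'n : (n : ℝ) < 2 * s' := by linarith
  have hs'β : 2 * s' < β := by
    have h2 : s' ≤ (n + β) / 4 := min_le_right _ _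
    linarith
  set δ : ℝ := (β - 2 * s') / 2 with hδdef
  have hδpos : 0 < δ := by rw [hδdef]; linarith
  set c : ℝ := δ * |θ| with hcdef
  have hc : 0 < c := mul_pos hδpos (abs_pos.mpr hθ0)
  set M : ℝ := max C 0 with hMdef
  have hM : 0 ≤ M := le_max_right _ _
  -- The summands.
  set T : ℤ → EuclideanSpace ℝ (Fin n) → ℂ := fun j x =>
    if 0 < (j : ℝ) * θ then
      𝓕⁻ (fun ξ => m ξ * (φ ((2 : ℝ) ^ (-j) • ξ) : ℂ)) x else 0 with hTdef
  have hTmeas : ∀ j : ℤ, AEMeasurable (fun x => (‖T j x‖₊ : ℝ≥0∞)) volume := by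
    intro j
    by_cases hj : 0 < (j : ℝ) * θ
    · simp only [hTdef, if_pos hj]
      exact (fourierInv_aesm _).enorm
    · simp only [hTdef, if_neg hj]
      simp only [nnnorm_zero, ENNReal.coe_zero]
      exact aemeasurable_const
  -- The key bound for each summand.
  have key : ∀ j : ℤ, ∫⁻ x, (‖T j x‖₊ : ℝ≥0∞)
      ≤ Kw n s' * ENNReal.ofReal (M * 2 ^ (-(c * |(j : ℝ)|))) := by
    intro j
    by_cases hj : 0 < (j : ℝ) * θ
    · simp only [hTdef, if_pos hj]
      set G : EuclideanSpace ℝ (Fin n) → ℂ := fun η => m ((2 : ℝ) ^ j • η) * (φ η : ℂ)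
        with hGdef
      have h2j : ((2:ℝ) ^ (-j) : ℝ) ≠ 0 := zpow_ne_zero _ two_ne_zero
      have h2j' : ((2:ℝ) ^ j : ℝ) ≠ 0 := zpow_ne_zero _ two_ne_zero
      have hFG : (fun ξ => m ξ * (φ ((2 : ℝ) ^ (-j) • ξ) : ℂ))
          = fun ξ => G ((2 : ℝ) ^ (-j) • ξ) := by
        funext ξ
        rw [hGdef]
        simp only
        congr 2
        rw [smul_smul, ← zpow_add₀ (two_ne_zero) j (-j), add_neg_cancel, zpow_zero, one_smul]
      rw [hFG]
      -- step 1: rescale to remove the dilation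
      have hGinv : AEMeasurable (fun x => (‖𝓕⁻ G x‖₊ : ℝ≥0∞)) volume :=
        (fourierInv_aesm G).enorm
      have hstep1 : ∫⁻ x, (‖𝓕⁻ (fun ξ => G ((2 : ℝ) ^ (-j) • ξ)) x‖₊ : ℝ≥0∞)
          = ∫⁻ x, (‖𝓕⁻ G x‖₊ : ℝ≥0∞) := by
        have hpt : ∀ x, (‖𝓕⁻ (fun ξ => G ((2 : ℝ) ^ (-j) • ξ)) x‖₊ : ℝ≥0∞)
            = ENNReal.ofReal |((((2:ℝ) ^ (-j)) ^ n)⁻¹)|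
              * (‖𝓕⁻ G (((2:ℝ) ^ (-j))⁻¹ • x)‖₊ : ℝ≥0∞) := by
          intro x
          rw [fourierInv_comp_smul G h2j x, nnnorm_smul, ENNReal.coe_mul,
            ← enorm_eq_nnnorm, Real.enorm_eq_ofReal_abs, _root_.abs_abs]
        simp_rw [hpt]
        rw [lintegral_const_mul' _ _ ENNReal.ofReal_ne_top,
          lintegral_comp_smul' (fun x => (‖𝓕⁻ G x‖₊ : ℝ≥0∞)) hGinv (inv_ne_zero h2j),
          ← mul_assoc, ← ENNReal.ofReal_mul (abs_nonneg _), ← abs_mul]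
        have hone : ((((2:ℝ) ^ (-j)) ^ n)⁻¹ * (((((2:ℝ) ^ (-j))⁻¹) ^ n)⁻¹)) = 1 := by
          rw [inv_pow, inv_inv]
          exact inv_mul_cancel₀ (pow_ne_zero _ h2j)
        rw [hone, abs_one, ENNReal.ofReal_one, one_mul]
      -- step 2: replace the inverse transform by the forward one
      have hstep2 : ∫⁻ x, (‖𝓕⁻ G x‖₊ : ℝ≥0∞) = ∫⁻ x, (‖𝓕 G x‖₊ : ℝ≥0∞) := by
        have hpt : ∀ x, (‖𝓕⁻ G x‖₊ : ℝ≥0∞) = (fun y => (‖𝓕 G y‖₊ : ℝ≥0∞)) (-x) := by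
          intro x
          simp only
          rw [Real.fourierInv_eq_fourier_neg]
        simp_rw [hpt]
        exact lintegral_comp_neg' _ (fourier_aesm G).enorm
      calc ∫⁻ x, (‖𝓕⁻ (fun ξ => G ((2 : ℝ) ^ (-j) • ξ)) x‖₊ : ℝ≥0∞)
          = ∫⁻ x, (‖𝓕 G x‖₊ : ℝ≥0∞) := by rw [hstep1, hstep2]
        _ ≤ Kw n s' * sobolevNorm s' G := cs_bound G
        _ ≤ Kw n s' * ENNReal.ofReal (C * 2 ^ ((j : ℝ) * θ * (2 * s' - β) / 2)) :=
            mul_le_mul_right (hm j hj s' hs'1 hs'2) _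
        _ ≤ Kw n s' * ENNReal.ofReal (M * 2 ^ (-(c * |(j : ℝ)|))) := by
            apply mul_le_mul_right
            apply ENNReal.ofReal_le_ofReal
            have hjθ : (j : ℝ) * θ = |(j : ℝ)| * |θ| := by
              rw [← abs_mul]; exact (_root_.abs_of_pos hj).symm
            have hexp : (j : ℝ) * θ * (2 * s' - β) / 2 = -(c * |(j : ℝ)|) := by
              rw [hjθ, hcdef, hδdef]; ring
            rw [hexp]
            exact mul_le_mul_of_nonneg_right (le_max_left C 0)
              (Real.rpow_nonneg (by norm_num) _)
    · simp only [hTdef, if_neg hj]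
      simp only [nnnorm_zero, ENNReal.coe_zero, lintegral_const, zero_mul]
      exact zero_le
  -- Assemble.
  rw [eLpNorm_one_eq_lintegral_enorm]
  calc ∫⁻ x, (‖∑' j : ℤ, T j x‖₊ : ℝ≥0∞)
      ≤ ∫⁻ x, ∑' j : ℤ, (‖T j x‖₊ : ℝ≥0∞) :=
        lintegral_mono fun x => ennnorm_tsum_le' _
    _ = ∑' j : ℤ, ∫⁻ x, (‖T j x‖₊ : ℝ≥0∞) := lintegral_tsum hTmeas
    _ ≤ ∑' j : ℤ, Kw n s' * ENNReal.ofReal (M * 2 ^ (-(c * |(j : ℝ)|))) :=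
        ENNReal.tsum_le_tsum key
    _ = Kw n s' * ∑' j : ℤ, ENNReal.ofReal (M * 2 ^ (-(c * |(j : ℝ)|))) :=
        ENNReal.tsum_mul_left
    _ < ⊤ := ENNReal.mul_lt_top (Kw_lt_top hs'n) (geom_tsum_lt_top hc hM)
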